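/- Let G be a group and H a normal subgroup of finite index n. Let U be a simple ℂ[G]-module. Then there exist m ≤ n simple ℂ[H]-modules V_1, …, V_m and an injective ℂ[G]-module homomorphism (in particular injective ℂ[H]-homomorphism) from U into V_1 ⊕ ⋯ ⊕ V_m, where G acts on the direct sum by permuting and twisting the factors. In particular, U has finite length (at most n) as a ℂ[H]-module. -/

import Mathlib

lemma aux_chainBound {R M : Type*} [Ring R] [AddCommGroup M] [Module R M]
    (P : Submodule R M → Prop)
    (Psup : ∀ a b, P a → P b → P (a ⊔ b)) (Pinf : ∀ a b, P a → P b → P (a ⊓ b)) :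
    ∀ (m : ℕ) (Ms : Fin m → Submodule R M), (∀ i, P (Ms i)) →
    (∀ i, ∀ W, P W → Ms i < W → W = ⊤) →
    ∀ (t : ℕ) (c : Fin (t + 1) → Submodule R M), (∀ j, P (c j)) → StrictMono c →
    c (Fin.last t) ⊓ (⨅ i, Ms i) ≤ c 0 → t ≤ m := by
  intro m
  induction m with
  | zero =>
    intro Ms _ _ t c _ hsm hle
    by_contra ht
    have h1 : (0 : Fin (t+1)) < Fin.last t := by
      rw [Fin.lt_iff_val_lt_val]; simp; omega
    have := hsm h1
    simp only [iInf_of_empty, inf_top_eq] at hle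
    exact absurd hle (not_le_of_gt this)
  | succ m ih =>
    intro Ms hP hMax t c hPc hsm hle
    classical
    set A := Ms (Fin.last m) with hA
    set S : Finset (Fin t) := Finset.univ.filter
      (fun j => c j.castSucc ⊓ A < c j.succ ⊓ A) with hS
    have hmemS : ∀ x : Fin t, x ∈ S ↔ c x.castSucc ⊓ A < c x.succ ⊓ A := by
      intro x; simp [hS]
    -- for steps not in S, the sup jumps to ⊤
    have key : ∀ x : Fin t, x ∉ S → c x.castSucc ⊔ A < c x.succ ⊔ A ∧ c x.succ ⊔ A = ⊤ := by
      intro x hx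
      rw [hmemS] at hx
      have hlt : c x.castSucc < c x.succ := hsm (Fin.castSucc_lt_succ (i := x))
      have hle' : c x.castSucc ⊔ A ≤ c x.succ ⊔ A := sup_le_sup_right hlt.le A
      rcases eq_or_lt_of_le hle' with heq | h
      · exact absurd (inf_lt_inf_of_lt_of_sup_le_sup hlt heq.ge) hx
      · have hAlt : A < c x.succ ⊔ A := lt_of_le_of_lt le_sup_right h
        exact ⟨h, hMax (Fin.last m) _ (Psup _ _ (hPc _) (hP _)) hAlt⟩
    have aux : ∀ j j' : Fin t, j < j' → j ∉ S → j' ∉ S → False := by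
      intro j j' hlt hj hj'
      have h1 := (key j hj).2
      have h3 : c j.succ ≤ c j'.castSucc := by
        apply hsm.monotone
        simp only [Fin.le_def, Fin.lt_def, Fin.val_succ, Fin.coe_castSucc] at hlt ⊢
        omega
      have h4 : (⊤ : Submodule R M) ≤ c j'.castSucc ⊔ A := by
        rw [← h1]; exact sup_le_sup_right h3 A
      exact absurd (lt_of_le_of_lt h4 (key j' hj').1) (by simp)
    have hcompl : ∀ j ∈ Sᶜ, ∀ j' ∈ Sᶜ, j = j' := by
      intro j hj j' hj'
      simp only [Finset.mem_compl] at hj hj'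
      by_contra hne
      rcases Ne.lt_or_gt hne with hlt | hlt
      · exact aux _ _ hlt hj hj'
      · exact aux _ _ hlt hj' hj
    have hcard : t ≤ S.card + 1 := by
      have h1 : Sᶜ.card ≤ 1 := Finset.card_le_one.mpr hcompl
      have h2 := Finset.card_compl S
      simp only [Fintype.card_fin] at h2
      have := S.card_le_univ
      simp only [Finset.card_univ, Fintype.card_fin] at this
      omega
    set k := S.card with hk
    set σ : Fin k → Fin t := fun i => ((S.orderIsoOfFin rfl) i : Fin t) with hσ
    have hσS : ∀ i, σ i ∈ S := fun i => ((S.orderIsoOfFin rfl) i).2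
    have hσmono : StrictMono σ := fun a b hab => (S.orderIsoOfFin rfl).strictMono hab
    set e : Fin (k + 1) → Fin (t + 1) := Fin.cases 0 (fun i => (σ i).succ) with he
    set d : Fin (k + 1) → Submodule R M := fun j => c (e j) ⊓ A with hd
    have hd0 : d 0 = c 0 ⊓ A := by simp [hd, he]
    have hdsucc : ∀ i : Fin k, d i.succ = c (σ i).succ ⊓ A := by
      intro i; simp [hd, he]
    have hdsm : StrictMono d := by
      rw [Fin.strictMono_iff_lt_succ]
      intro j
      have hstep := (hmemS (σ j)).mp (hσS j)
      rw [hdsucc]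
      refine lt_of_le_of_lt ?_ hstep
      refine inf_le_inf_right A ?_
      apply hsm.monotone
      show e j.castSucc ≤ (σ j).castSucc
      rcases Fin.eq_zero_or_eq_succ j.castSucc with h0 | ⟨i, hi⟩
      · rw [h0]; simp only [he, Fin.cases_zero]; exact Fin.zero_le _
      · rw [hi]
        simp only [he, Fin.cases_succ]
        have : (i : ℕ) + 1 = (j : ℕ) := by
          have := congrArg Fin.val hi
          simpa [Fin.val_succ] using this.symm
        have hij : i < j := by rw [Fin.lt_def]; omega
        rw [Fin.succ_le_castSucc_iff]
        exact hσmono hij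
    have hPd : ∀ j, P (d j) := fun j => Pinf _ _ (hPc _) (hP _)
    have hdle : d (Fin.last k) ⊓ (⨅ i : Fin m, Ms i.castSucc) ≤ d 0 := by
      rw [hd0]
      have h1 : d (Fin.last k) ≤ c (Fin.last t) ⊓ A := by
        refine le_inf (le_trans inf_le_left (hsm.monotone (Fin.le_last _))) inf_le_right
      have h2 : A ⊓ (⨅ i : Fin m, Ms i.castSucc) ≤ ⨅ i : Fin (m+1), Ms i := by
        refine le_iInf fun i => ?_
        rcases Fin.eq_castSucc_or_eq_last i with ⟨i', rfl⟩ | rfl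
        · exact le_trans inf_le_right (iInf_le _ i')
        · exact inf_le_left
      refine le_inf ?_ (le_trans inf_le_left (le_trans h1 inf_le_right))
      calc d (Fin.last k) ⊓ (⨅ i : Fin m, Ms i.castSucc)
          ≤ (c (Fin.last t) ⊓ A) ⊓ (⨅ i : Fin m, Ms i.castSucc) := inf_le_inf_right _ h1
        _ ≤ c (Fin.last t) ⊓ (⨅ i : Fin (m+1), Ms i) := by
            rw [inf_assoc]; exact inf_le_inf_left _ h2
        _ ≤ c 0 := hle
    have := ih (fun i => Ms i.castSucc) (fun i => hP _) (fun i W hW hlt => hMax i.castSucc W hW hlt)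
      k d hPd hdsm hdle
    omega


/-- Let `H` be a normal subgroup of finite index `n` of a group `G`, and `U` a simple
`ℂ[G]`-module.  Then there are `m ≤ n` maximal `H`-stable subspaces `M_1, …, M_m` of `U`
(so that each quotient `U/M_i` is a simple `ℂ[H]`-module), permuted by the `G`-action,
with `⨅ M_i = ⊥`; hence `u ↦ ⊕ᵢ (u + M_i)` is an injective `G`-equivariant map of `U`
into the direct sum of the simple `ℂ[H]`-modules `V_i = U/M_i` (on which `G` acts by
permuting and twisting the factors).  In particular `U` has length at most `n` as a
`ℂ[H]`-module. -/
theorem simpleModule_embeds_in_sum_of_simples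
    {G : Type*} [Group G] (H : Subgroup G) [H.Normal] (n : ℕ)
    (hn : H.index = n) (hn0 : n ≠ 0)
    (U : Type*) [AddCommGroup U] [Module ℂ U] [DistribMulAction G U] [SMulCommClass G ℂ U]
    (hUnontriv : Nontrivial U)
    (hUsimple : ∀ W : Submodule ℂ U, (∀ g : G, ∀ u ∈ W, g • u ∈ W) → W = ⊥ ∨ W = ⊤) :
    ∃ m : ℕ, m ≤ n ∧ ∃ M : Fin m → Submodule ℂ U,
      (∀ i, ∀ h : H, ∀ u ∈ M i, (h : G) • u ∈ M i) ∧
      (∀ i, M i ≠ ⊤ ∧ ∀ W : Submodule ℂ U,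
        (∀ h : H, ∀ u ∈ W, (h : G) • u ∈ W) → M i < W → W = ⊤) ∧
      (⨅ i, M i) = ⊥ ∧
      (∀ g : G, ∀ i, ∃ j, (M i).map (DistribMulAction.toLinearMap ℂ U g) = M j) ∧
      (∀ c : Fin (n + 2) → Submodule ℂ U,
        (∀ i, ∀ h : H, ∀ u ∈ c i, (h : G) • u ∈ c i) → ¬ StrictMono c) := by
  classical
  -- the action by a fixed group element as a linear map
  set φ : G → U →ₗ[ℂ] U := fun g => DistribMulAction.toLinearMap ℂ U g with hφ
  have hφ_apply : ∀ (g : G) (u : U), φ g u = g • u := fun g u => rfl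
  have hφ_comp : ∀ g g' : G, (φ g).comp (φ g') = φ (g * g') := by
    intro g g'; ext u; simp only [LinearMap.comp_apply, hφ_apply, mul_smul]
  have hmapmap : ∀ (g g' : G) (W : Submodule ℂ U),
      (W.map (φ g')).map (φ g) = W.map (φ (g * g')) := by
    intro g g' W; rw [← hφ_comp, Submodule.map_comp]
  have hφ_one : φ 1 = LinearMap.id := by ext u; simp [hφ_apply]
  have hmap_one : ∀ W : Submodule ℂ U, W.map (φ 1) = W := by
    intro W; rw [hφ_one, Submodule.map_id]
  have hmap_cancel : ∀ (g : G) (W : Submodule ℂ U), (W.map (φ g)).map (φ g⁻¹) = W := by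
    intro g W; rw [hmapmap, inv_mul_cancel, hmap_one]
  have hmap_cancel' : ∀ (g : G) (W : Submodule ℂ U), (W.map (φ g⁻¹)).map (φ g) = W := by
    intro g W; rw [hmapmap, mul_inv_cancel, hmap_one]
  have hmap_top : ∀ g : G, (⊤ : Submodule ℂ U).map (φ g) = ⊤ := by
    intro g
    rw [Submodule.map_top, LinearMap.range_eq_top]
    intro u; exact ⟨g⁻¹ • u, by rw [hφ_apply, smul_smul, mul_inv_cancel, one_smul]⟩
  -- the stability predicate
  set P : Submodule ℂ U → Prop := fun W => ∀ h : H, ∀ u ∈ W, (h : G) • u ∈ W with hP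
  have Psup : ∀ a b, P a → P b → P (a ⊔ b) := by
    intro a b ha hb h u hu
    rcases Submodule.mem_sup.mp hu with ⟨y, hy, z, hz, rfl⟩
    rw [smul_add]
    exact Submodule.add_mem_sup (ha h y hy) (hb h z hz)
  have Pinf : ∀ a b, P a → P b → P (a ⊓ b) := by
    intro a b ha hb h u hu
    exact ⟨ha h u hu.1, hb h u hu.2⟩
  -- stability is preserved by translation
  have Pmap : ∀ (g : G) (W : Submodule ℂ U), P W → P (W.map (φ g)) := by
    intro g W hW h u hu
    rcases hu with ⟨w, hw, rfl⟩
    have hmem : g⁻¹ * (h : G) * g ∈ H := ‹H.Normal›.conj_mem' (h : G) h.2 g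
    refine ⟨(g⁻¹ * (h : G) * g) • w, hW ⟨_, hmem⟩ w hw, ?_⟩
    rw [hφ_apply, hφ_apply, smul_smul, smul_smul]
    congr 1
    group
  -- a nonzero vector
  obtain ⟨x, y, hxy⟩ := hUnontriv
  set u₀ : U := x - y with hu₀
  have hu₀ne : u₀ ≠ 0 := sub_ne_zero.mpr hxy
  -- the span of the G-orbit of u₀ is all of U
  have horbit : Submodule.span ℂ (Set.range fun g : G => g • u₀) = ⊤ := by
    have hstab : ∀ g : G, ∀ u ∈ Submodule.span ℂ (Set.range fun g : G => g • u₀),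
        g • u ∈ Submodule.span ℂ (Set.range fun g : G => g • u₀) := by
      intro g u hu
      have h1 : (Submodule.span ℂ (Set.range fun g : G => g • u₀)).map (φ g)
          ≤ Submodule.span ℂ (Set.range fun g : G => g • u₀) := by
        rw [Submodule.map_span]
        apply Submodule.span_mono
        rintro _ ⟨_, ⟨g', rfl⟩, rfl⟩
        refine ⟨g * g', ?_⟩
        show (g * g') • u₀ = φ g (g' • u₀)
        rw [hφ_apply, mul_smul]
      exact h1 ⟨u, hu, rfl⟩
    rcases hUsimple _ hstab with hbot | htop
    · exfalso
      apply hu₀ne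
      have : u₀ ∈ Submodule.span ℂ (Set.range fun g : G => g • u₀) :=
        Submodule.subset_span ⟨1, one_smul G u₀⟩
      rw [hbot] at this
      simpa using this
    · exact htop
  -- the quotient is finite and nonempty
  have hQcard : Nat.card (G ⧸ H) = n := hn
  have hQ : Nonempty (G ⧸ H) ∧ Finite (G ⧸ H) := Nat.card_ne_zero.mp (hQcard ▸ hn0)
  haveI := hQ.1
  haveI := hQ.2
  haveI : Fintype (G ⧸ H) := Fintype.ofFinite _
  -- finite family of vectors whose H-stable closure is everything
  set v : G ⧸ H → U := fun q => q.out • u₀ with hv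
  set gen : Set U := {z | ∃ (h : H) (q : G ⧸ H), z = (h : G) • v q} with hgen
  have hgen_top : Submodule.span ℂ gen = ⊤ := by
    rw [← top_le_iff, ← horbit, Submodule.span_le]
    rintro _ ⟨g, rfl⟩
    apply Submodule.subset_span
    set q : G ⧸ H := QuotientGroup.mk g with hq
    set r : G := q.out with hr
    have hmk : QuotientGroup.mk r = q := QuotientGroup.out_eq' q
    have hh : r⁻¹ * g ∈ H := QuotientGroup.eq.mp hmk
    have hconj : r * (r⁻¹ * g) * r⁻¹ ∈ H := ‹H.Normal›.conj_mem _ hh r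
    refine ⟨⟨r * (r⁻¹ * g) * r⁻¹, hconj⟩, q, ?_⟩
    show g • u₀ = (r * (r⁻¹ * g) * r⁻¹) • (r • u₀)
    rw [smul_smul]
    congr 1
    group
  -- every H-stable subspace containing all the `v q` is ⊤
  have hgen_forces : ∀ W : Submodule ℂ U, P W → (∀ q, v q ∈ W) → W = ⊤ := by
    intro W hW hvW
    rw [← top_le_iff, ← hgen_top, Submodule.span_le]
    rintro _ ⟨h, q, rfl⟩
    exact hW h _ (hvW q)
  -- Zorn's lemma: a maximal proper H-stable subspace M₀
  set s : Set (Submodule ℂ U) := {W | P W ∧ W ≠ ⊤} with hs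
  have hbot_mem : (⊥ : Submodule ℂ U) ∈ s := by
    constructor
    · intro h u hu
      simp only [Submodule.mem_bot] at hu ⊢
      rw [hu, smul_zero]
    · intro htop
      apply hu₀ne
      have : u₀ ∈ (⊥ : Submodule ℂ U) := htop ▸ Submodule.mem_top
      simpa using this
  obtain ⟨M₀, -, hM₀mem, hM₀max⟩ : ∃ M₀, ⊥ ≤ M₀ ∧ Maximal (· ∈ s) M₀ := by
    apply zorn_le_nonempty₀ s ?_ ⊥ hbot_mem
    intro C hCs hC y hy
    refine ⟨sSup C, ⟨?_, ?_⟩, fun z hz => le_sSup hz⟩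
    · intro h u hu
      obtain ⟨W, hWC, huW⟩ := (Submodule.mem_sSup_of_directed ⟨y, hy⟩ hC.directedOn).mp hu
      exact le_sSup hWC ((hCs hWC).1 h u huW)
    · intro htop
      have hvmem : ∀ q : G ⧸ H, ∃ W ∈ C, v q ∈ W := by
        intro q
        exact (Submodule.mem_sSup_of_directed ⟨y, hy⟩ hC.directedOn).mp
          (htop ▸ Submodule.mem_top)
      choose Wq hWqC hWqv using hvmem
      obtain ⟨a, ⟨q₀, rfl⟩, hamax⟩ :=
        Set.Finite.exists_maximalFor id (Set.range Wq) (Set.finite_range Wq)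
          (Set.range_nonempty Wq)
      have hall : ∀ q, v q ∈ Wq q₀ := by
        intro q
        have htot : Wq q ≤ Wq q₀ ∨ Wq q₀ ≤ Wq q := by
          rcases eq_or_ne (Wq q) (Wq q₀) with heq | hne
          · exact Or.inl heq.le
          · rcases hC (hWqC q₀) (hWqC q) (Ne.symm hne) with h | h
            · exact Or.inr h
            · exact Or.inl h
        rcases htot with hle | hle
        · exact hle (hWqv q)
        · have heq : Wq q₀ = Wq q := le_antisymm hle (hamax ⟨q, rfl⟩ hle)
          rw [heq]
          exact hWqv q
      exact (hCs (hWqC q₀)).2 (hgen_forces _ (hCs (hWqC q₀)).1 hall)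
  have hM₀P : P M₀ := hM₀mem.1
  have hM₀top : M₀ ≠ ⊤ := hM₀mem.2
  have hM₀max' : ∀ W : Submodule ℂ U, P W → M₀ < W → W = ⊤ := by
    intro W hW hlt
    by_contra hne
    exact absurd (hM₀max ⟨hW, hne⟩ hlt.le) (not_le_of_gt hlt)
  -- the translates of M₀
  set Mg : G → Submodule ℂ U := fun g => M₀.map (φ g) with hMg
  have hMgP : ∀ g, P (Mg g) := fun g => Pmap g M₀ hM₀P
  have hMgh : ∀ (g : G) (h : H), Mg (g * h) = Mg g := by
    intro g h
    have h1 : M₀.map (φ (h : G)) = M₀ := by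
      apply le_antisymm
      · rintro _ ⟨w, hw, rfl⟩; exact hM₀P h w hw
      · intro w hw
        refine ⟨(h : G)⁻¹ • w, by simpa using hM₀P h⁻¹ w hw, ?_⟩
        rw [hφ_apply, smul_smul, mul_inv_cancel, one_smul]
    show M₀.map (φ (g * h)) = M₀.map (φ g)
    rw [← hmapmap, h1]
  have hMgtop : ∀ g, Mg g ≠ ⊤ := by
    intro g htop
    apply hM₀top
    have h1 : M₀.map (φ g) = ⊤ := htop
    have := hmap_cancel g M₀
    rw [h1, hmap_top] at this
    exact this.symm
  have hMgmax : ∀ (g : G) (W : Submodule ℂ U), P W → Mg g < W → W = ⊤ := by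
    intro g W hW hlt
    have hW' : P (W.map (φ g⁻¹)) := Pmap g⁻¹ W hW
    have hlt' : M₀ < W.map (φ g⁻¹) := by
      refine lt_of_le_of_ne ?_ ?_
      · conv_lhs => rw [← hmap_cancel g M₀]
        exact Submodule.map_mono hlt.le
      · intro heq
        apply hlt.ne
        have h2 := congrArg (Submodule.map (φ g)) heq
        rw [hmap_cancel'] at h2
        exact h2
    have h3 := hM₀max' _ hW' hlt'
    have h2 := congrArg (Submodule.map (φ g)) h3
    rw [hmap_cancel', hmap_top] at h2
    exact h2
  -- translates only depend on the coset
  set F : G ⧸ H → Submodule ℂ U := fun q => Mg q.out with hF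
  have hFg : ∀ g : G, Mg g = F (QuotientGroup.mk g) := by
    intro g
    set r : G := (QuotientGroup.mk g : G ⧸ H).out with hr
    have hmk : QuotientGroup.mk r = (QuotientGroup.mk g : G ⧸ H) := QuotientGroup.out_eq' _
    have hh : r⁻¹ * g ∈ H := QuotientGroup.eq.mp hmk
    have : Mg (r * ((⟨r⁻¹ * g, hh⟩ : H) : G)) = Mg r := hMgh r ⟨r⁻¹ * g, hh⟩
    calc Mg g = Mg (r * (r⁻¹ * g)) := by rw [mul_inv_cancel_left]
    _ = Mg r := this
    _ = F (QuotientGroup.mk g) := rfl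
  -- enumerate the translates
  set T : Finset (Submodule ℂ U) := (Set.finite_range F).toFinset with hT
  set m : ℕ := T.card with hm
  set e : T ≃ Fin m := T.equivFin with he
  set M : Fin m → Submodule ℂ U := fun i => ((e.symm i : T) : Submodule ℂ U) with hM
  have hMrange : ∀ i, M i ∈ Set.range F := by
    intro i
    exact (Set.finite_range F).mem_toFinset.mp (e.symm i).2
  have hMsurj : ∀ q : G ⧸ H, ∃ i, M i = F q := by
    intro q
    have hmem : F q ∈ T := (Set.finite_range F).mem_toFinset.mpr ⟨q, rfl⟩
    refine ⟨e ⟨F q, hmem⟩, ?_⟩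
    show ((e.symm (e ⟨F q, hmem⟩) : T) : Submodule ℂ U) = F q
    rw [Equiv.symm_apply_apply]
  have hmn : m ≤ n := by
    have himg : T = Finset.image F Finset.univ := by
      ext W
      simp [hT, Set.Finite.mem_toFinset, Set.mem_range]
    have := Finset.card_image_le (f := F) (s := Finset.univ)
    rw [hm, himg]
    refine le_trans this ?_
    rw [Finset.card_univ, ← Nat.card_eq_fintype_card, hQcard]
  have hm0 : 0 < m := by
    rcases hMsurj (QuotientGroup.mk 1) with ⟨i, -⟩
    exact lt_of_le_of_lt (Nat.zero_le _) i.2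
  -- properties of M
  have hMP : ∀ i, P (M i) := by
    intro i
    obtain ⟨q, hq⟩ := hMrange i
    rw [← hq]; exact hMgP _
  have hMtop : ∀ i, M i ≠ ⊤ := by
    intro i
    obtain ⟨q, hq⟩ := hMrange i
    rw [← hq]; exact hMgtop _
  have hMmax : ∀ i, ∀ W : Submodule ℂ U, P W → M i < W → W = ⊤ := by
    intro i W hW hlt
    obtain ⟨q, hq⟩ := hMrange i
    rw [← hq] at hlt
    exact hMgmax _ _ hW hlt
  -- the intersection is G-stable, hence ⊥
  have hinf : (⨅ i, M i) = ⊥ := by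
    have hstab : ∀ g : G, ∀ u ∈ (⨅ i, M i), g • u ∈ (⨅ i, M i) := by
      intro g u hu
      rw [Submodule.mem_iInf] at hu ⊢
      intro i
      obtain ⟨q, hq⟩ := hMrange i
      obtain ⟨j, hj⟩ := hMsurj (QuotientGroup.mk (g⁻¹ * q.out))
      have hj' : M j = Mg (g⁻¹ * q.out) := by rw [hj, ← hFg]
      have huj := hu j
      rw [hj'] at huj
      obtain ⟨w, hw, rfl⟩ := huj
      rw [← hq]
      refine ⟨w, hw, ?_⟩
      rw [hφ_apply, hφ_apply, smul_smul, mul_inv_cancel_left]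
    rcases hUsimple _ hstab with hbot | htop
    · exact hbot
    · exfalso
      apply hMtop ⟨0, hm0⟩
      rw [← top_le_iff, ← htop]
      exact iInf_le _ _
  -- the translates are permuted by G
  have hperm : ∀ g : G, ∀ i, ∃ j, (M i).map (φ g) = M j := by
    intro g i
    obtain ⟨q, hq⟩ := hMrange i
    obtain ⟨j, hj⟩ := hMsurj (QuotientGroup.mk (g * q.out))
    refine ⟨j, ?_⟩
    rw [← hq]
    show (Mg q.out).map (φ g) = M j
    rw [hj, ← hFg]
    show (M₀.map (φ q.out)).map (φ g) = Mg (g * q.out)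
    rw [hmapmap]
  refine ⟨m, hmn, M, hMP, fun i => ⟨hMtop i, hMmax i⟩, hinf, hperm, ?_⟩
  -- the chain bound
  intro c hc hsm
  have := aux_chainBound P Psup Pinf m M hMP hMmax (n + 1) c hc hsm
    (by rw [hinf]; exact le_trans inf_le_right bot_le)
  omega
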